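/- Let d ≥ 1 be an integer and ε ∈ (0, 2^{-e}). (i) If an integer k ≥ 0 satisfies 2k ≥ d·log₂(k/ε²), then exp(−2^{(2k+d)/d}·ε²) ≤ e^{−2k}. (ii) If k₀ is an integer with k₀ ≥ (d/2)·log₂(d/(2ε²)) + d·log₂log₂(d/(2ε²)) (and k₀ ≥ (d/2)·log₂(2^e d)), then every integer k ≥ k₀ satisfies 2k ≥ d·log₂(k/ε²), and consequently Σ_{k ≥ k₀} 2^{1+k}·exp(−2^{(2k+d)/d}·ε²) ≤ 4·2^{−k₀}. -/

import Mathlib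

open Real


private lemma two_mul_sub_logb_mono {s t : ℝ} (hs : 1 ≤ s) (hst : s ≤ t) :
    2 * s - Real.logb 2 s ≤ 2 * t - Real.logb 2 t := by
  have hs0 : 0 < s := by linarith
  have ht0 : 0 < t := by linarith
  have hlog2 : (0.6931471803 : ℝ) < Real.log 2 := Real.log_two_gt_d9
  have h1 : Real.logb 2 t - Real.logb 2 s = Real.log (t / s) / Real.log 2 := by
    rw [Real.logb, Real.logb, Real.log_div (by positivity) (by positivity)]
    ring
  have h2 : Real.log (t / s) ≤ t / s - 1 := Real.log_le_sub_one_of_pos (by positivity)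
  have h3 : t / s - 1 ≤ t - s := by
    rw [div_sub_one (ne_of_gt hs0), div_le_iff₀ hs0]
    nlinarith
  have h4 : Real.log (t / s) / Real.log 2 ≤ (t - s) / Real.log 2 := by
    gcongr
    · linarith
  have h5 : (t - s) / Real.log 2 ≤ 2 * (t - s) := by
    rw [div_le_iff₀ (by linarith)]
    nlinarith
  linarith

private lemma logb_le_two_mul_sub_one {L : ℝ} (hL : 1 ≤ L) : Real.logb 2 L ≤ 2 * (L - 1) := by
  have hlog2 : (0.6931471803 : ℝ) < Real.log 2 := Real.log_two_gt_d9
  have h2 : Real.log L ≤ L - 1 := Real.log_le_sub_one_of_pos (by linarith)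
  rw [Real.logb, div_le_iff₀ (by linarith)]
  nlinarith

private lemma key_ineq {L t : ℝ} (hL : 4.4 ≤ L) (ht : L / 2 + Real.logb 2 L ≤ t) :
    1 + L + Real.logb 2 t ≤ 2 * t := by
  have hLnn : 0 ≤ Real.logb 2 L := Real.logb_nonneg (by norm_num) (by linarith)
  have hLle : Real.logb 2 L ≤ 2 * (L - 1) := logb_le_two_mul_sub_one (by linarith)
  set s : ℝ := L / 2 + Real.logb 2 L with hs_def
  have hs1 : 1 ≤ s := by simp only [hs_def]; linarith
  have hs0 : 0 < s := by linarith
  have hmono := two_mul_sub_logb_mono hs1 ht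
  -- it suffices: 1 + L ≤ 2 * s - logb 2 s
  have hstep : Real.logb 2 (2 * s) ≤ Real.logb 2 (L ^ 2) := by
    rw [Real.logb_le_logb (by norm_num) (by positivity) (by positivity)]
    simp only [hs_def]
    nlinarith
  have e1 : Real.logb 2 (2 * s) = 1 + Real.logb 2 s := by
    rw [Real.logb_mul (by norm_num) (ne_of_gt hs0), Real.logb_self_eq_one (by norm_num)]
  have e2 : Real.logb 2 (L ^ 2) = 2 * Real.logb 2 L := by
    rw [Real.logb_pow]; norm_num
  have : 1 + Real.logb 2 s ≤ 2 * Real.logb 2 L := by rw [← e1, ← e2]; exact hstep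
  have h2s : 2 * s = L + 2 * Real.logb 2 L := by simp only [hs_def]; ring
  linarith

/-- **Elementary tail estimates from the truncation argument** (from the proof of Lemma
`tail-ineq`).  Let `d ≥ 1` be an integer and `ε ∈ (0, 2^{−e})`.
(i) If an integer `k ≥ 0` satisfies `2k ≥ d log₂(k/ε²)`, then
`exp(−2^{(2k+d)/d} ε²) ≤ e^{−2k}`.
(ii) If an integer `k₀` satisfies `k₀ ≥ (d/2) log₂(d/(2ε²)) + d log₂log₂(d/(2ε²))` and
`k₀ ≥ (d/2) log₂(2^e d)`, then every integer `k ≥ k₀` satisfies `2k ≥ d log₂(k/ε²)`, and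
consequently `Σ_{k ≥ k₀} 2^{1+k} exp(−2^{(2k+d)/d} ε²) ≤ 4 · 2^{−k₀}`. -/
theorem truncation_tail_elementary_estimates
    (d : ℕ) (hd : 1 ≤ d) (ε : ℝ) (hε : 0 < ε) (hε' : ε < (2 : ℝ) ^ (-(Real.exp 1))) :
    -- (i)
    (∀ k : ℕ, (d : ℝ) * Real.logb 2 ((k : ℝ) / ε ^ 2) ≤ 2 * (k : ℝ) →
      Real.exp (-((2 : ℝ) ^ ((2 * (k : ℝ) + d) / (d : ℝ)) * ε ^ 2))
        ≤ Real.exp (-(2 * (k : ℝ)))) ∧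
    -- (ii)
    (∀ k₀ : ℕ,
      ((d : ℝ) / 2) * Real.logb 2 ((d : ℝ) / (2 * ε ^ 2))
          + (d : ℝ) * Real.logb 2 (Real.logb 2 ((d : ℝ) / (2 * ε ^ 2))) ≤ (k₀ : ℝ) →
      ((d : ℝ) / 2) * Real.logb 2 ((2 : ℝ) ^ (Real.exp 1) * (d : ℝ)) ≤ (k₀ : ℝ) →
      (∀ k : ℕ, k₀ ≤ k → (d : ℝ) * Real.logb 2 ((k : ℝ) / ε ^ 2) ≤ 2 * (k : ℝ)) ∧
      (∑' k : ℕ, if k₀ ≤ k then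
          (2 : ℝ) ^ (1 + k) * Real.exp (-((2 : ℝ) ^ ((2 * (k : ℝ) + d) / (d : ℝ)) * ε ^ 2))
        else 0) ≤ 4 * (2 : ℝ) ^ (-(k₀ : ℝ))) := by
  have hd0 : (0 : ℝ) < d := by exact_mod_cast hd
  have hε2 : (0 : ℝ) < ε ^ 2 := by positivity
  -- Part (i)
  have part1 : ∀ k : ℕ, (d : ℝ) * Real.logb 2 ((k : ℝ) / ε ^ 2) ≤ 2 * (k : ℝ) →
      Real.exp (-((2 : ℝ) ^ ((2 * (k : ℝ) + d) / (d : ℝ)) * ε ^ 2))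
        ≤ Real.exp (-(2 * (k : ℝ))) := by
    intro k hk
    rw [Real.exp_le_exp, neg_le_neg_iff]
    have hpow : (0 : ℝ) < (2 : ℝ) ^ ((2 * (k : ℝ) + d) / (d : ℝ)) :=
      Real.rpow_pos_of_pos (by norm_num) _
    rcases Nat.eq_zero_or_pos k with h0 | hk1
    · subst h0
      simp only [Nat.cast_zero, mul_zero]
      positivity
    · have hk0 : (0 : ℝ) < k := by exact_mod_cast hk1
      have h1 : Real.logb 2 ((k : ℝ) / ε ^ 2) ≤ 2 * (k : ℝ) / d := by
        rw [le_div_iff₀ hd0]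
        nlinarith [hk]
      have h2 : (k : ℝ) / ε ^ 2 ≤ (2 : ℝ) ^ (2 * (k : ℝ) / d) := by
        calc (k : ℝ) / ε ^ 2 = (2 : ℝ) ^ (Real.logb 2 ((k : ℝ) / ε ^ 2)) :=
              (Real.rpow_logb (by norm_num) (by norm_num) (by positivity)).symm
          _ ≤ (2 : ℝ) ^ (2 * (k : ℝ) / d) :=
              Real.rpow_le_rpow_of_exponent_le (by norm_num) h1
      have h3 : (2 : ℝ) ^ ((2 * (k : ℝ) + d) / (d : ℝ))
          = (2 : ℝ) ^ (2 * (k : ℝ) / d) * 2 := by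
        rw [show (2 * (k : ℝ) + d) / (d : ℝ) = 2 * (k : ℝ) / d + 1 by
          field_simp, Real.rpow_add (by norm_num), Real.rpow_one]
      rw [h3]
      have h4 : ((k : ℝ) / ε ^ 2) * ε ^ 2 ≤ (2 : ℝ) ^ (2 * (k : ℝ) / d) * ε ^ 2 := by
        gcongr
      have h5 : ((k : ℝ) / ε ^ 2) * ε ^ 2 = (k : ℝ) := by field_simp
      nlinarith
  refine ⟨part1, ?_⟩
  intro k₀ h1 h2
  set A : ℝ := (d : ℝ) / (2 * ε ^ 2) with hA_def
  set L : ℝ := Real.logb 2 A with hL_def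
  have he1 : (2.7182818283 : ℝ) < Real.exp 1 := Real.exp_one_gt_d9
  -- A is large
  have hεsq : ε ^ 2 < (2 : ℝ) ^ (-(2 * Real.exp 1)) := by
    have : ε ^ 2 < ((2 : ℝ) ^ (-(Real.exp 1))) ^ 2 := by
      apply sq_lt_sq' _ hε'
      have : (0 : ℝ) < (2 : ℝ) ^ (-(Real.exp 1)) := Real.rpow_pos_of_pos (by norm_num) _
      linarith
    calc ε ^ 2 < ((2 : ℝ) ^ (-(Real.exp 1))) ^ 2 := this
      _ = (2 : ℝ) ^ (-(2 * Real.exp 1)) := by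
        rw [sq, ← Real.rpow_add (by norm_num)]; ring_nf
  have hA : (2 : ℝ) ^ (2 * Real.exp 1 - 1) ≤ A := by
    rw [hA_def, le_div_iff₀ (by positivity)]
    have : (2 : ℝ) ^ (2 * Real.exp 1 - 1) * (2 * ε ^ 2)
        ≤ (2 : ℝ) ^ (2 * Real.exp 1 - 1) * (2 * (2 : ℝ) ^ (-(2 * Real.exp 1))) := by
      gcongr
    calc (2 : ℝ) ^ (2 * Real.exp 1 - 1) * (2 * ε ^ 2)
        ≤ (2 : ℝ) ^ (2 * Real.exp 1 - 1) * (2 * (2 : ℝ) ^ (-(2 * Real.exp 1))) := this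
      _ = (2 : ℝ) ^ (2 * Real.exp 1 - 1) * (2 : ℝ) ^ (-(2 * Real.exp 1)) * 2 := by ring
      _ = (2 : ℝ) ^ (-1 : ℝ) * 2 := by
        rw [← Real.rpow_add (by norm_num)]
        ring_nf
        rw [Real.rpow_neg_one]; norm_num
      _ = 1 := by
        rw [Real.rpow_neg_one]
        norm_num
      _ ≤ (d : ℝ) := by exact_mod_cast Nat.one_le_cast.mpr hd
  have hL : (4.4 : ℝ) ≤ L := by
    have h5 : Real.logb 2 ((2 : ℝ) ^ (2 * Real.exp 1 - 1)) ≤ L := by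
      rw [hL_def, Real.logb_le_logb (by norm_num)
        (Real.rpow_pos_of_pos (by norm_num) _) (lt_of_lt_of_le (Real.rpow_pos_of_pos (by norm_num) _) hA)]
      exact hA
    rw [Real.logb_rpow (by norm_num) (by norm_num)] at h5
    linarith
  have hLnn : 0 ≤ Real.logb 2 L := Real.logb_nonneg (by norm_num) (by linarith)
  have hApos : (0 : ℝ) < A := by positivity
  -- k₀ is at least 1
  have hk₀pos : 1 ≤ k₀ := by
    by_contra h
    push_neg at h
    interval_cases k₀
    simp only [Nat.cast_zero] at h1
    nlinarith [h1]
  -- claim 1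
  have claim1 : ∀ k : ℕ, k₀ ≤ k → (d : ℝ) * Real.logb 2 ((k : ℝ) / ε ^ 2) ≤ 2 * (k : ℝ) := by
    intro k hk
    have hk1 : 1 ≤ k := le_trans hk₀pos hk
    have hk0 : (0 : ℝ) < k := by exact_mod_cast hk1
    have hkk₀ : ((k₀ : ℝ)) ≤ (k : ℝ) := by exact_mod_cast hk
    have ht : L / 2 + Real.logb 2 L ≤ (k : ℝ) / d := by
      rw [le_div_iff₀ hd0]
      nlinarith [h1, hkk₀]
    have hkey := key_ineq hL ht
    have hsplit : Real.logb 2 ((k : ℝ) / ε ^ 2) = 1 + L + Real.logb 2 ((k : ℝ) / d) := by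
      have heq : (k : ℝ) / ε ^ 2 = 2 * A * ((k : ℝ) / d) := by
        rw [hA_def]; field_simp
      rw [heq, Real.logb_mul (by positivity) (by positivity),
        Real.logb_mul (by norm_num) (ne_of_gt hApos), Real.logb_self_eq_one (by norm_num),
        hL_def]
    rw [hsplit]
    have := mul_le_mul_of_nonneg_left hkey (le_of_lt hd0)
    calc (d : ℝ) * (1 + L + Real.logb 2 ((k : ℝ) / d)) ≤ (d : ℝ) * (2 * ((k : ℝ) / d)) := this
      _ = 2 * (k : ℝ) := by field_simp
  refine ⟨claim1, ?_⟩
  -- the sum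
  set f : ℕ → ℝ := fun k => if k₀ ≤ k then
      (2 : ℝ) ^ (1 + k) * Real.exp (-((2 : ℝ) ^ ((2 * (k : ℝ) + d) / (d : ℝ)) * ε ^ 2))
    else 0 with hf_def
  set g : ℕ → ℝ := fun k => if k₀ ≤ k then 2 * (1 / 2 : ℝ) ^ k else 0 with hg_def
  have hgeo : (2 * Real.exp (-2) : ℝ) ≤ 1 / 2 := by
    rw [Real.exp_neg]
    rw [show (2 : ℝ) = 1 + 1 by norm_num, Real.exp_add]
    have h4 : (4 : ℝ) < Real.exp 1 * Real.exp 1 := by nlinarith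
    rw [mul_inv_le_iff₀ (by positivity)]
    nlinarith
  have hfg : ∀ k, f k ≤ g k := by
    intro k
    simp only [hf_def, hg_def]
    split_ifs with h
    · have hbound := part1 k (claim1 k h)
      have hexp : Real.exp (-(2 * (k : ℝ))) = (Real.exp (-2)) ^ k := by
        rw [← Real.exp_nat_mul]
        ring_nf
      calc (2 : ℝ) ^ (1 + k) * Real.exp (-((2 : ℝ) ^ ((2 * (k : ℝ) + d) / (d : ℝ)) * ε ^ 2))
          ≤ (2 : ℝ) ^ (1 + k) * Real.exp (-(2 * (k : ℝ))) := by
            gcongr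
        _ = 2 * (2 * Real.exp (-2)) ^ k := by
            rw [hexp, pow_add, pow_one, mul_pow]; ring
        _ ≤ 2 * (1 / 2 : ℝ) ^ k := by
            gcongr
    · exact le_refl 0
  have hgnn : ∀ k, 0 ≤ g k := by
    intro k
    simp only [hg_def]
    split_ifs
    · positivity
    · exact le_refl 0
  have hfnn : ∀ k, 0 ≤ f k := by
    intro k
    simp only [hf_def]
    split_ifs
    · positivity
    · exact le_refl 0
  have hg_le : ∀ k, g k ≤ 2 * (1 / 2 : ℝ) ^ k := by
    intro k
    simp only [hg_def]
    split_ifs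
    · exact le_refl _
    · positivity
  have hsum2 : Summable (fun k : ℕ => 2 * (1 / 2 : ℝ) ^ k) :=
    (summable_geometric_of_lt_one (by norm_num) (by norm_num)).mul_left 2
  have sg : Summable g := Summable.of_nonneg_of_le hgnn hg_le hsum2
  have sf : Summable f := Summable.of_nonneg_of_le hfnn hfg sg
  have htg : ∑' k, g k = 4 * (1 / 2 : ℝ) ^ k₀ := by
    have h0 : ∀ i ∈ Finset.range k₀, g i = 0 := by
      intro i hi
      simp only [hg_def, if_neg (Nat.not_le.mpr (Finset.mem_range.mp hi))]
    have hshift := sg.sum_add_tsum_nat_add k₀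
    rw [Finset.sum_eq_zero h0, zero_add] at hshift
    rw [← hshift]
    have hgs : ∀ n : ℕ, g (n + k₀) = (2 * (1 / 2 : ℝ) ^ k₀) * (1 / 2 : ℝ) ^ n := by
      intro n
      simp only [hg_def, if_pos (Nat.le_add_left k₀ n), pow_add]
      ring
    rw [tsum_congr hgs, tsum_mul_left, tsum_geometric_of_lt_one (by norm_num) (by norm_num)]
    norm_num
    ring
  have hpow : (2 : ℝ) ^ (-(k₀ : ℝ)) = (1 / 2 : ℝ) ^ k₀ := by
    rw [Real.rpow_neg (by norm_num), Real.rpow_natCast, one_div, inv_pow]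
  calc (∑' k, f k) ≤ ∑' k, g k := sf.tsum_le_tsum hfg sg
    _ = 4 * (1 / 2 : ℝ) ^ k₀ := htg
    _ = 4 * (2 : ℝ) ^ (-(k₀ : ℝ)) := by rw [hpow]
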